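/- arXiv:1010.1652 — 2 statements merged into one kernel-verified Lean document; each statement's English description precedes it below -/
import Mathlib

section
/- Let μ < 0, a = √(-μ), and let r be a complex number with sinh(a·r) ≠ 0. If λ := a·coth(a·r) is a real number with |λ| > a, then λ = a·coth(a·Re r) and there exists an integer k such that r = Re r + k·(π i / a). -/
open Complex Real

theorem stmt_9 (mu : ℝ) (hmu : mu < 0) (r : ℂ)
    (hsinh : Complex.sinh ((Real.sqrt (-mu) : ℂ) * r) ≠ 0)
    (lam : ℝ)
    (hlam : (lam : ℂ) =
      (Real.sqrt (-mu) : ℂ) * Complex.cosh ((Real.sqrt (-mu) : ℂ) * r) /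
        Complex.sinh ((Real.sqrt (-mu) : ℂ) * r))
    (habs : Real.sqrt (-mu) < |lam|) :
    lam = Real.sqrt (-mu) * Real.cosh (Real.sqrt (-mu) * r.re) /
        Real.sinh (Real.sqrt (-mu) * r.re) ∧
    ∃ k : ℤ, r = (r.re : ℂ) + (k : ℂ) * (Real.pi * Complex.I / (Real.sqrt (-mu) : ℂ)) := by
  set a := Real.sqrt (-mu) with ha_def
  have ha : 0 < a := Real.sqrt_pos.mpr (by linarith)
  set x := a * r.re with hx_def
  set y := a * r.im with hy_def
  have hz : (a : ℂ) * r = (x : ℂ) + (y : ℂ) * I := by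
    simp [Complex.ext_iff, hx_def, hy_def]
  have hsinhz : Complex.sinh ((a : ℂ) * r)
      = ((Real.sinh x * Real.cos y : ℝ) : ℂ) + ((Real.cosh x * Real.sin y : ℝ) : ℂ) * I := by
    rw [hz, Complex.sinh_add, Complex.cosh_mul_I, Complex.sinh_mul_I]
    push_cast
    ring
  have hcoshz : Complex.cosh ((a : ℂ) * r)
      = ((Real.cosh x * Real.cos y : ℝ) : ℂ) + ((Real.sinh x * Real.sin y : ℝ) : ℂ) * I := by
    rw [hz, Complex.cosh_add, Complex.cosh_mul_I, Complex.sinh_mul_I]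
    push_cast
    ring
  rw [eq_div_iff hsinh] at hlam
  rw [hsinhz, hcoshz] at hlam
  have h1 : lam * (Real.sinh x * Real.cos y) = a * (Real.cosh x * Real.cos y) := by
    have := congrArg Complex.re hlam
    simpa [Complex.sinh_ofReal_re, Complex.cos_ofReal_re] using this
  have h2 : lam * (Real.cosh x * Real.sin y) = a * (Real.sinh x * Real.sin y) := by
    have := congrArg Complex.im hlam
    simpa [Complex.sinh_ofReal_re, Complex.sin_ofReal_re] using this
  have hcoshpos : 0 < Real.cosh x := Real.cosh_pos x
  have hsiny : Real.sin y = 0 := by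
    by_contra hs
    have h2' : lam * Real.cosh x = a * Real.sinh x := by
      apply mul_right_cancel₀ hs
      linear_combination h2
    have habs2 : |lam| * Real.cosh x = a * |Real.sinh x| := by
      have := congrArg (fun t : ℝ => |t|) h2'
      simp only [abs_mul, abs_of_pos hcoshpos, abs_of_pos ha] at this
      exact this
    have hsq : Real.cosh x ^ 2 = Real.sinh x ^ 2 + 1 := by
      have := Real.cosh_sq x
      linarith [this]
    have h3 : |Real.sinh x| < Real.cosh x := by
      nlinarith [abs_nonneg (Real.sinh x), _root_.sq_abs (Real.sinh x)]
    nlinarith [abs_nonneg (Real.sinh x)]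
  have hcosy : Real.cos y = 1 ∨ Real.cos y = -1 := by
    have := Real.sin_sq_add_cos_sq y
    rw [hsiny] at this
    have h' : Real.cos y * Real.cos y = 1 := by nlinarith
    exact mul_self_eq_one_iff.mp h'
  have hcosyne : Real.cos y ≠ 0 := by rcases hcosy with h | h <;> rw [h] <;> norm_num
  have hsinhx : Real.sinh x ≠ 0 := by
    intro h0
    apply hsinh
    rw [hsinhz, h0, hsiny]
    simp
  have h1' : lam * Real.sinh x = a * Real.cosh x := by
    apply mul_right_cancel₀ hcosyne
    linear_combination h1
  constructor
  · rw [eq_div_iff hsinhx]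
    linarith [h1']
  · have := Real.sin_eq_zero_iff.mp hsiny
    obtain ⟨k, hk⟩ := this
    refine ⟨k, ?_⟩
    have hrim : r.im = k * Real.pi / a := by
      field_simp
      rw [mul_comm]
      linarith [hk]
    have hane : (a : ℂ) ≠ 0 := by exact_mod_cast ne_of_gt ha
    rw [← Complex.re_add_im r, hrim]
    simp only [Complex.add_re, Complex.ofReal_re, Complex.mul_re, Complex.ofReal_im, Complex.I_re, Complex.I_im, mul_zero, zero_mul, sub_zero, add_zero]
    push_cast
    field_simp
end

section
/- Let μ < 0, a = √(-μ), and let r be a complex number with cosh(a·r) ≠ 0. If λ := a·tanh(a·r) is a real number with |λ| < a, then λ = a·tanh(a·Re r) and there exists an integer k such that Im r = k·π/a. -/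
open Complex Real

theorem stmt_10 (mu : ℝ) (hmu : mu < 0) (r : ℂ)
    (hcosh : Complex.cosh ((Real.sqrt (-mu) : ℂ) * r) ≠ 0)
    (lam : ℝ)
    (hlam : (lam : ℂ) = (Real.sqrt (-mu) : ℂ) * Complex.tanh ((Real.sqrt (-mu) : ℂ) * r))
    (habs : |lam| < Real.sqrt (-mu)) :
    lam = Real.sqrt (-mu) * Real.tanh (Real.sqrt (-mu) * r.re) ∧
    ∃ k : ℤ, r.im = k * Real.pi / Real.sqrt (-mu) := by
  set a := Real.sqrt (-mu) with ha_def
  have ha : 0 < a := Real.sqrt_pos.2 (by linarith)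
  have haC : (a : ℂ) ≠ 0 := by exact_mod_cast ha.ne'
  set z := (a : ℂ) * r with hz_def
  have hzre : z.re = a * r.re := by simp [hz_def]
  have hzim : z.im = a * r.im := by simp [hz_def]
  set x := z.re with hx_def
  set y := z.im with hy_def
  -- lam * cosh z = a * sinh z
  have hmain : (lam : ℂ) * Complex.cosh z = (a : ℂ) * Complex.sinh z := by
    rw [Complex.tanh_eq_sinh_div_cosh] at hlam
    field_simp at hlam
    linear_combination hlam
  -- tanh z is real, hence tanh (conj z) = tanh z
  have htz : Complex.tanh z = ((lam / a : ℝ) : ℂ) := by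
    push_cast
    rw [eq_div_iff haC, Complex.tanh_eq_sinh_div_cosh, div_mul_eq_mul_div, div_eq_iff hcosh]
    linear_combination -hmain
  have htconj : Complex.tanh ((starRingEnd ℂ) z) = Complex.tanh z := by
    rw [Complex.tanh_conj, htz, Complex.conj_ofReal]
  have hconj : Complex.cosh ((starRingEnd ℂ) z) ≠ 0 := by
    rw [Complex.cosh_conj]
    simpa using hcosh
  have hsinh0 : Complex.sinh (z - (starRingEnd ℂ) z) = 0 := by
    rw [Complex.sinh_sub]
    rw [Complex.tanh_eq_sinh_div_cosh, Complex.tanh_eq_sinh_div_cosh] at htconj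
    field_simp at htconj
    linear_combination -htconj
  have hsin : Real.sin (2 * y) = 0 := by
    have h2 : z - (starRingEnd ℂ) z = ((2 * y : ℝ) : ℂ) * I := Complex.sub_conj z
    rw [h2, Complex.sinh_mul_I] at hsinh0
    have h3 : Complex.sin ((2 * y : ℝ) : ℂ) = 0 :=
      (mul_eq_zero.1 hsinh0).resolve_right Complex.I_ne_zero
    rw [← Complex.ofReal_sin] at h3
    exact_mod_cast h3
  obtain ⟨n, hn⟩ := Real.sin_eq_zero_iff.1 hsin
  rcases Int.even_or_odd n with ⟨m, hm⟩ | ⟨m, hm⟩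
  · -- even: y = m * π
    have hy : y = m * π := by
      have h5 : (n : ℝ) = m + m := by exact_mod_cast congrArg (Int.cast : ℤ → ℝ) hm
      rw [h5] at hn; linarith
    have hzeq : z = (x : ℂ) + ((m * π : ℝ) : ℂ) * I := by
      rw [← hy]; exact (Complex.re_add_im z).symm
    have hcos : Real.cos (m * π) ≠ 0 := by
      have h := Real.abs_cos_int_mul_pi m
      intro h0; rw [h0] at h; simp at h
    have hsinh : Complex.sinh z = ((Real.sinh x * Real.cos (m * π) : ℝ) : ℂ) := by
      rw [hzeq, Complex.sinh_add, Complex.sinh_mul_I, Complex.cosh_mul_I,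
        ← Complex.ofReal_sin, ← Complex.ofReal_cos,
        show Real.sin (m * π) = 0 from Real.sin_int_mul_pi m]
      push_cast; ring
    have hcosh' : Complex.cosh z = ((Real.cosh x * Real.cos (m * π) : ℝ) : ℂ) := by
      rw [hzeq, Complex.cosh_add, Complex.sinh_mul_I, Complex.cosh_mul_I,
        ← Complex.ofReal_sin, ← Complex.ofReal_cos,
        show Real.sin (m * π) = 0 from Real.sin_int_mul_pi m]
      push_cast; ring
    have hreal : lam * (Real.cosh x * Real.cos (m * π)) = a * (Real.sinh x * Real.cos (m * π)) := by
      rw [hsinh, hcosh'] at hmain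
      exact_mod_cast hmain
    have hr2 : lam * Real.cosh x = a * Real.sinh x := by
      apply mul_right_cancel₀ hcos
      linear_combination hreal
    have hch : Real.cosh x ≠ 0 := (Real.cosh_pos x).ne'
    constructor
    · rw [← hzre, Real.tanh_eq_sinh_div_cosh]
      field_simp
      linarith
    · refine ⟨m, ?_⟩
      have h6 : a * r.im = m * π := by rw [← hzim, hy]
      field_simp
      linarith
  · -- odd: y = m * π + π / 2, contradiction with |lam| < a
    exfalso
    have hy : y = m * π + π / 2 := by
      have h5 : (n : ℝ) = 2 * m + 1 := by exact_mod_cast congrArg (Int.cast : ℤ → ℝ) hm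
      rw [h5] at hn; linarith
    set s := Real.sin y with hs_def
    have hsy : s = Real.cos (m * π) := by
      rw [hs_def, hy, Real.sin_add, Real.sin_pi_div_two, Real.cos_pi_div_two,
        Real.sin_int_mul_pi]; ring
    have hcy : Real.cos y = 0 := by
      rw [hy, Real.cos_add, Real.sin_pi_div_two, Real.cos_pi_div_two,
        Real.sin_int_mul_pi]; ring
    have hs_ne : s ≠ 0 := by
      have h := Real.abs_cos_int_mul_pi m
      rw [hsy]
      intro h0; rw [h0] at h; simp at h
    have hzeq : z = (x : ℂ) + ((y : ℝ) : ℂ) * I := (Complex.re_add_im z).symm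
    have hsinh : Complex.sinh z = ((Real.cosh x * s : ℝ) : ℂ) * I := by
      rw [hzeq, Complex.sinh_add, Complex.sinh_mul_I, Complex.cosh_mul_I,
        ← Complex.ofReal_sin, ← Complex.ofReal_cos, hcy]
      push_cast [← hs_def]; ring
    have hcosh' : Complex.cosh z = ((Real.sinh x * s : ℝ) : ℂ) * I := by
      rw [hzeq, Complex.cosh_add, Complex.sinh_mul_I, Complex.cosh_mul_I,
        ← Complex.ofReal_sin, ← Complex.ofReal_cos, hcy]
      push_cast [← hs_def]; ring
    have hreal : lam * (Real.sinh x * s) = a * (Real.cosh x * s) := by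
      rw [hsinh, hcosh'] at hmain
      have h4 : ((lam * (Real.sinh x * s) : ℝ) : ℂ) * I
          = ((a * (Real.cosh x * s) : ℝ) : ℂ) * I := by
        push_cast
        push_cast at hmain
        linear_combination hmain
      have h5 := mul_right_cancel₀ Complex.I_ne_zero h4
      exact_mod_cast h5
    have hsh_ne : Real.sinh x ≠ 0 := by
      intro h0
      apply hcosh
      rw [hcosh', h0]
      simp
    have key : lam * Real.sinh x = a * Real.cosh x := by
      apply mul_right_cancel₀ hs_ne
      linear_combination hreal
    have hsq : lam ^ 2 < a ^ 2 := by
      have h7 := abs_lt.1 habs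
      nlinarith [abs_nonneg lam, _root_.sq_abs lam]
    have hid : Real.cosh x ^ 2 = 1 + Real.sinh x ^ 2 := by
      nlinarith [Real.cosh_sq_sub_sinh_sq x]
    have hpos : 0 < Real.sinh x ^ 2 := by positivity
    have key2 : (lam * Real.sinh x) ^ 2 = (a * Real.cosh x) ^ 2 := by rw [key]
    have hid2 : a ^ 2 * Real.cosh x ^ 2 = a ^ 2 + a ^ 2 * Real.sinh x ^ 2 := by
      rw [hid]; ring
    nlinarith [key2, hid2, mul_pos (sub_pos.2 hsq) hpos, mul_pos ha ha]
end
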